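/- arXiv:2307.13780 — 2 statements merged into one kernel-verified Lean document; each statement's English description precedes it below -/
import Mathlib

section
/- Let Ω = [−1,1], Π = Π_2(R^1) the quadratic polynomials, and P : C[−1,1] → Π an arbitrary interpolation projector with three admissible nodes −1 ≤ r < s < t ≤ 1. Let T(x) = (x, x²) and S ⊂ R² the triangle with vertices (r,r²), (s,s²), (t,t²). Then ξ(T([−1,1]); S) = (3‖P‖ − 1)/2, where ‖P‖ is the operator norm of P on C[−1,1]. -/
/-- The (solid) simplex with vertices `v`. -/
noncomputable def simplexHull {n : ℕ} (v : Fin (n+1) → (Fin n → ℝ)) : Set (Fin n → ℝ) :=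
  convexHull ℝ (Set.range v)

/-- The homothetic copy `σS` of the simplex with vertices `v`, with ratio `σ`
about the centroid. -/
noncomputable def scaledSimplex {n : ℕ} (v : Fin (n+1) → (Fin n → ℝ)) (σ : ℝ) :
    Set (Fin n → ℝ) :=
  AffineMap.homothety (Finset.univ.centroid ℝ v) σ '' simplexHull v

/-- The absorption coefficient `ξ(Ω; S)` of `Ω` by the simplex with vertices `v`. -/
noncomputable def absCoef {n : ℕ} (Ω : Set (Fin n → ℝ)) (v : Fin (n+1) → (Fin n → ℝ)) : ℝ :=
  sInf {σ : ℝ | 1 ≤ σ ∧ Ω ⊆ scaledSimplex v σ}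


/-- The Lagrange basis polynomial for node `j` of the node family `c`. -/
noncomputable def lag {k : ℕ} (c : Fin k → ℝ) (j : Fin k) (x : ℝ) : ℝ :=
  ∏ i ∈ Finset.univ.erase j, (x - c i) / (c j - c i)

/-- The norm of the interpolation projector with nodes `c`, i.e. the maximum over
`[-1,1]` of the Lebesgue function `x ↦ ∑ⱼ |λⱼ(x)|`. -/
noncomputable def projNorm {k : ℕ} (c : Fin k → ℝ) : ℝ :=
  sSup {s : ℝ | ∃ x ∈ Set.Icc (-1:ℝ) 1, s = ∑ j, |lag c j x|}

lemma lag0_eq (r s t x : ℝ) : lag ![r,s,t] 0 x = (x-s)*(x-t)/((r-s)*(r-t)) := by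
  unfold lag
  have h : (Finset.univ.erase (0 : Fin 3)) = {1, 2} := by decide
  rw [h, Finset.prod_insert (by decide), Finset.prod_singleton]
  simp only [Matrix.cons_val_zero, Matrix.cons_val_one, Matrix.head_cons,
    Matrix.cons_val_two, Matrix.tail_cons]
  rw [div_mul_div_comm]

lemma lag1_eq (r s t x : ℝ) : lag ![r,s,t] 1 x = (x-r)*(x-t)/((s-r)*(s-t)) := by
  unfold lag
  have h : (Finset.univ.erase (1 : Fin 3)) = {0, 2} := by decide
  rw [h, Finset.prod_insert (by decide), Finset.prod_singleton]
  simp only [Matrix.cons_val_zero, Matrix.cons_val_one, Matrix.head_cons,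
    Matrix.cons_val_two, Matrix.tail_cons]
  rw [div_mul_div_comm]

lemma lag2_eq (r s t x : ℝ) : lag ![r,s,t] 2 x = (x-r)*(x-s)/((t-r)*(t-s)) := by
  unfold lag
  have h : (Finset.univ.erase (2 : Fin 3)) = {0, 1} := by decide
  rw [h, Finset.prod_insert (by decide), Finset.prod_singleton]
  simp only [Matrix.cons_val_zero, Matrix.cons_val_one, Matrix.head_cons,
    Matrix.cons_val_two, Matrix.tail_cons]
  rw [div_mul_div_comm]

lemma uniq_weights (r s t x u0 u1 u2 : ℝ) (hrs : r < s) (hst : s < t)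
    (h1 : u0 + u1 + u2 = 1) (h2 : u0*r + u1*s + u2*t = x)
    (h3 : u0*r^2 + u1*s^2 + u2*t^2 = x^2) :
    u0 = (x-s)*(x-t)/((r-s)*(r-t)) ∧ u1 = (x-r)*(x-t)/((s-r)*(s-t)) ∧
      u2 = (x-r)*(x-s)/((t-r)*(t-s)) := by
  have hrt : r < t := hrs.trans hst
  have e1 : r - s ≠ 0 := by linarith
  have e2 : r - t ≠ 0 := by linarith
  have e3 : s - t ≠ 0 := by linarith
  have e4 : s - r ≠ 0 := by linarith
  have e5 : t - r ≠ 0 := by linarith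
  have e6 : t - s ≠ 0 := by linarith
  refine ⟨?_, ?_, ?_⟩
  · rw [eq_div_iff (mul_ne_zero e1 e2)]
    linear_combination h3 - (s+t)*h2 + s*t*h1
  · rw [eq_div_iff (mul_ne_zero e4 e3)]
    linear_combination h3 - (r+t)*h2 + r*t*h1
  · rw [eq_div_iff (mul_ne_zero e5 e6)]
    linear_combination h3 - (r+s)*h2 + r*s*h1

lemma lag_sums (r s t x : ℝ) (hrs : r < s) (hst : s < t) :
    lag ![r,s,t] 0 x + lag ![r,s,t] 1 x + lag ![r,s,t] 2 x = 1 ∧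
    lag ![r,s,t] 0 x * r + lag ![r,s,t] 1 x * s + lag ![r,s,t] 2 x * t = x ∧
    lag ![r,s,t] 0 x * r^2 + lag ![r,s,t] 1 x * s^2 + lag ![r,s,t] 2 x * t^2 = x^2 := by
  have hrt : r < t := hrs.trans hst
  have e1 : r - s ≠ 0 := by linarith
  have e2 : r - t ≠ 0 := by linarith
  have e3 : s - t ≠ 0 := by linarith
  have e4 : s - r ≠ 0 := by linarith
  have e5 : t - r ≠ 0 := by linarith
  have e6 : t - s ≠ 0 := by linarith
  rw [lag0_eq, lag1_eq, lag2_eq]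
  refine ⟨?_, ?_, ?_⟩ <;> (field_simp; ring)

lemma abs_lag_sum (r s t x : ℝ) (hrs : r < s) (hst : s < t) :
    |lag ![r,s,t] 0 x| + |lag ![r,s,t] 1 x| + |lag ![r,s,t] 2 x| =
      1 + 2 * max 0 (-(min (lag ![r,s,t] 0 x) (min (lag ![r,s,t] 1 x) (lag ![r,s,t] 2 x)))) := by
  have hrt : r < t := hrs.trans hst
  set a := lag ![r,s,t] 0 x with ha
  set b := lag ![r,s,t] 1 x with hb
  set d := lag ![r,s,t] 2 x with hd
  have hsum : a + b + d = 1 := (lag_sums r s t x hrs hst).1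
  have hD0 : (0:ℝ) < (r-s)*(r-t) := by nlinarith
  have hD1 : (s-r)*(s-t) < 0 := by nlinarith
  have hD2 : (0:ℝ) < (t-r)*(t-s) := by nlinarith
  -- sign characterizations
  have ha' : a < 0 ↔ (x-s)*(x-t) < 0 := by
    rw [ha, lag0_eq, div_neg_iff]
    constructor
    · rintro (⟨h1, h2⟩ | ⟨h1, h2⟩) <;> [linarith; exact h1]
    · intro h; right; exact ⟨h, hD0⟩
  have hb' : b < 0 ↔ 0 < (x-r)*(x-t) := by
    rw [hb, lag1_eq, div_neg_iff]
    constructor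
    · rintro (⟨h1, h2⟩ | ⟨h1, h2⟩) <;> [exact h1; linarith]
    · intro h; left; exact ⟨h, hD1⟩
  have hd' : d < 0 ↔ (x-r)*(x-s) < 0 := by
    rw [hd, lag2_eq, div_neg_iff]
    constructor
    · rintro (⟨h1, h2⟩ | ⟨h1, h2⟩) <;> [linarith; exact h1]
    · intro h; right; exact ⟨h, hD2⟩
  -- at most one negative
  have help1 : ∀ p q : ℝ, p < q → (x-p)*(x-q) < 0 → p < x ∧ x < q := by
    intro p q hpq h
    constructor
    · by_contra hc; push_neg at hc; nlinarith
    · by_contra hc; push_neg at hc; nlinarith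
  have help2 : ∀ p q : ℝ, p < q → 0 < (x-p)*(x-q) → x < p ∨ q < x := by
    intro p q hpq h
    rcases lt_or_ge x p with h1 | h1
    · exact Or.inl h1
    · right; by_contra hc; push_neg at hc; nlinarith
  have hab : a < 0 → 0 ≤ b := by
    intro h; rw [ha'] at h
    by_contra hbneg; push_neg at hbneg; rw [hb'] at hbneg
    obtain ⟨q1, q2⟩ := help1 s t hst h
    rcases help2 r t hrt hbneg with h' | h' <;> linarith
  have had : a < 0 → 0 ≤ d := by
    intro h; rw [ha'] at h
    by_contra hneg; push_neg at hneg; rw [hd'] at hneg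
    obtain ⟨q1, q2⟩ := help1 s t hst h
    obtain ⟨q3, q4⟩ := help1 r s hrs hneg
    linarith
  have hbd : b < 0 → 0 ≤ d := by
    intro h; rw [hb'] at h
    by_contra hneg; push_neg at hneg; rw [hd'] at hneg
    obtain ⟨q3, q4⟩ := help1 r s hrs hneg
    rcases help2 r t hrt h with h' | h' <;> linarith
  have hba : b < 0 → 0 ≤ a := by
    intro h; rw [hb'] at h
    by_contra hneg; push_neg at hneg; rw [ha'] at hneg
    obtain ⟨q1, q2⟩ := help1 s t hst hneg
    rcases help2 r t hrt h with h' | h' <;> linarith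
  rcases lt_or_ge a 0 with haneg | hapos
  · have h1 := hab haneg; have h2 := had haneg
    have hmin : min a (min b d) = a := by
      rw [min_eq_left]; exact le_trans haneg.le (le_min h1 h2)
    rw [hmin, abs_of_neg haneg, abs_of_nonneg h1, abs_of_nonneg h2,
      max_eq_right (by linarith)]
    linarith
  · rcases lt_or_ge b 0 with hbneg | hbpos
    · have h2 := hbd hbneg
      have hmin : min a (min b d) = b := by
        rw [min_comm b d, min_eq_right (le_trans hbneg.le h2), min_eq_right
          (le_trans hbneg.le hapos)]
      rw [hmin, abs_of_nonneg hapos, abs_of_neg hbneg, abs_of_nonneg h2,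
        max_eq_right (by linarith)]
      linarith
    · rcases lt_or_ge d 0 with hdneg | hdpos
      · have hmin : min a (min b d) = d := by
          rw [min_eq_right (le_trans hdneg.le hbpos), min_eq_right (le_trans hdneg.le hapos)]
        rw [hmin, abs_of_nonneg hapos, abs_of_nonneg hbpos, abs_of_neg hdneg,
          max_eq_right (by linarith)]
        linarith
      · have hmin : 0 ≤ min a (min b d) := le_min hapos (le_min hbpos hdpos)
        rw [abs_of_nonneg hapos, abs_of_nonneg hbpos, abs_of_nonneg hdpos,
          max_eq_left (by linarith)]
        linarith

lemma mem_simplexHull_iff {n : ℕ} (v : Fin (n+1) → (Fin n → ℝ)) (p : Fin n → ℝ) :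
    p ∈ simplexHull v ↔
      ∃ w : Fin (n+1) → ℝ, (∀ i, 0 ≤ w i) ∧ ∑ i, w i = 1 ∧ ∑ i, w i • v i = p := by
  unfold simplexHull
  rw [convexHull_range_eq_exists_affineCombination]
  constructor
  · rintro ⟨sfin, w, hw0, hw1, hw2⟩
    refine ⟨fun i => if i ∈ sfin then w i else 0, fun i => ?_, ?_, ?_⟩
    · dsimp only
      split_ifs with h
      · exact hw0 i h
      · exact le_rfl
    · dsimp only
      rw [Finset.sum_ite_mem, Finset.univ_inter]; exact hw1
    · dsimp only
      rw [Finset.affineCombination_eq_linear_combination _ _ _ hw1] at hw2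
      rw [← hw2]
      have : ∀ i, (if i ∈ sfin then w i else 0) • v i
          = (if i ∈ sfin then w i • v i else 0) := by
        intro i; split_ifs <;> simp
      simp_rw [this, Finset.sum_ite_mem, Finset.univ_inter]
  · rintro ⟨w, h0, h1, h2⟩
    exact ⟨Finset.univ, w, fun i _ => h0 i, h1, by
      rw [Finset.affineCombination_eq_linear_combination _ _ _ h1]; exact h2⟩

lemma centroid_eq (v : Fin 3 → Fin 2 → ℝ) :
    Finset.univ.centroid ℝ v = ∑ i, ((3:ℝ)⁻¹) • v i := by
  rw [Finset.centroid_def, Finset.affineCombination_eq_linear_combination _ _ _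
    (by simp [Finset.centroidWeights])]
  refine Finset.sum_congr rfl fun i _ => ?_
  rw [Finset.centroidWeights_apply]
  norm_num

lemma mem_scaled_iff (r s t : ℝ) (hrs : r < s) (hst : s < t) (σ : ℝ) (hσ : 1 ≤ σ) (x : ℝ) :
    (![x, x^2] ∈ scaledSimplex ![![r,r^2],![s,s^2],![t,t^2]] σ ↔
      ∀ j : Fin 3, (1-σ)/3 ≤ lag ![r,s,t] j x) := by
  have hσ0 : (0:ℝ) < σ := by linarith
  set v : Fin 3 → Fin 2 → ℝ := ![![r,r^2],![s,s^2],![t,t^2]] with hv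
  have hv0 : v 0 = ![r, r^2] := rfl
  have hv1 : v 1 = ![s, s^2] := rfl
  have hv2 : v 2 = ![t, t^2] := rfl
  constructor
  · rintro ⟨q, hq, hmap⟩
    rw [mem_simplexHull_iff] at hq
    obtain ⟨w, hw00, hw10, hw20⟩ := hq
    have hw0 : ∀ i : Fin 3, 0 ≤ w i := hw00
    have hw1 : ∑ i : Fin 3, w i = 1 := hw10
    have hw2 : ∑ i : Fin 3, w i • v i = q := hw20
    clear hw00 hw10 hw20
    set u : Fin 3 → ℝ := fun j => (1-σ)/3 + σ * w j with hu
    have hw1' : w 0 + w 1 + w 2 = 1 := by rw [← hw1, Fin.sum_univ_three]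
    have hu1 : u 0 + u 1 + u 2 = 1 := by simp only [hu]; linear_combination σ * hw1'
    have hvec : ∑ j, u j • v j = ![x, x^2] := by
      rw [← hmap, AffineMap.homothety_apply, centroid_eq, ← hw2]
      funext i
      simp only [vsub_eq_sub, vadd_eq_add, Fin.sum_univ_three, hu, Pi.add_apply,
        Pi.sub_apply, Pi.smul_apply, smul_eq_mul]
      ring
    have hc1 : u 0 * r + u 1 * s + u 2 * t = x := by
      have h := congrFun hvec 0
      simp only [Fin.sum_univ_three, Pi.add_apply, Pi.smul_apply, smul_eq_mul,
        hv0, hv1, hv2] at h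
      simpa using h
    have hc2 : u 0 * r^2 + u 1 * s^2 + u 2 * t^2 = x^2 := by
      have h := congrFun hvec 1
      simp only [Fin.sum_univ_three, Pi.add_apply, Pi.smul_apply, smul_eq_mul,
        hv0, hv1, hv2] at h
      simpa using h
    obtain ⟨e0, e1, e2⟩ := uniq_weights r s t x (u 0) (u 1) (u 2) hrs hst hu1 hc1 hc2
    intro j
    fin_cases j
    · show (1-σ)/3 ≤ lag ![r,s,t] 0 x
      rw [lag0_eq, ← e0]
      have := hw0 0
      simp only [hu]
      nlinarith
    · show (1-σ)/3 ≤ lag ![r,s,t] 1 x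
      rw [lag1_eq, ← e1]
      have := hw0 1
      simp only [hu]
      nlinarith
    · show (1-σ)/3 ≤ lag ![r,s,t] 2 x
      rw [lag2_eq, ← e2]
      have := hw0 2
      simp only [hu]
      nlinarith
  · intro hj
    set l : Fin 3 → ℝ := fun j => lag ![r,s,t] j x with hl
    obtain ⟨hs1, hs2, hs3⟩ := lag_sums r s t x hrs hst
    set w : Fin 3 → ℝ := fun j => (l j - (1-σ)/3) / σ with hw
    have hw0 : ∀ j, 0 ≤ w j := fun j => div_nonneg (by have := hj j; simp only [hl]; linarith)
      hσ0.le
    have hw1 : ∑ j, w j = 1 := by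
      rw [Fin.sum_univ_three]
      simp only [hw, hl]
      field_simp
      linarith
    have hrep : ∑ j, l j • v j = ![x, x^2] := by
      funext i
      fin_cases i
      · simp only [Fin.sum_univ_three, Pi.add_apply, Pi.smul_apply, smul_eq_mul,
          hv0, hv1, hv2, hl]
        simpa using hs2
      · simp only [Fin.sum_univ_three, Pi.add_apply, Pi.smul_apply, smul_eq_mul,
          hv0, hv1, hv2, hl]
        simpa using hs3
    refine ⟨∑ j, w j • v j, (mem_simplexHull_iff v _).2 ⟨w, hw0, hw1, rfl⟩, ?_⟩
    rw [AffineMap.homothety_apply, centroid_eq, ← hrep]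
    have hcan : ∀ j, σ * w j = l j - (1-σ)/3 := by
      intro j; simp only [hw]; field_simp
    simp only [vsub_eq_sub, vadd_eq_add, Fin.sum_univ_three]
    rw [smul_sub, smul_add, smul_add, smul_add, smul_add, smul_smul, smul_smul, smul_smul,
      hcan 0, hcan 1, hcan 2]
    module


theorem quadratic_absCoef_eq_projNorm (r s t : ℝ)
    (hr : -1 ≤ r) (hrs : r < s) (hst : s < t) (ht : t ≤ 1) :
    absCoef ((fun x : ℝ => ![x, x^2]) '' Set.Icc (-1) 1)
        ![![r, r^2], ![s, s^2], ![t, t^2]] =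
      (3 * projNorm ![r, s, t] - 1) / 2 := by
  have hrt : r < t := hrs.trans hst
  set g : ℝ → ℝ := fun x =>
    min (lag ![r,s,t] 0 x) (min (lag ![r,s,t] 1 x) (lag ![r,s,t] 2 x)) with hg
  -- continuity of g
  have hcont : Continuous g := by
    have hfun : g = fun x => min ((x-s)*(x-t)/((r-s)*(r-t)))
        (min ((x-r)*(x-t)/((s-r)*(s-t))) ((x-r)*(x-s)/((t-r)*(t-s)))) := by
      funext x
      simp only [hg, lag0_eq, lag1_eq, lag2_eq]
    rw [hfun]
    have c0 : Continuous fun x:ℝ => (x-s)*(x-t)/((r-s)*(r-t)) :=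
      (((continuous_id.sub continuous_const).mul
        (continuous_id.sub continuous_const)).div_const _)
    have c1 : Continuous fun x:ℝ => (x-r)*(x-t)/((s-r)*(s-t)) :=
      (((continuous_id.sub continuous_const).mul
        (continuous_id.sub continuous_const)).div_const _)
    have c2 : Continuous fun x:ℝ => (x-r)*(x-s)/((t-r)*(t-s)) :=
      (((continuous_id.sub continuous_const).mul
        (continuous_id.sub continuous_const)).div_const _)
    exact c0.min (c1.min c2)
  obtain ⟨x₀, hx₀, hmin⟩ := isCompact_Icc.exists_isMinOn
    (Set.nonempty_Icc.2 (by norm_num : (-1:ℝ) ≤ 1)) hcont.continuousOn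
  set m : ℝ := g x₀ with hm
  have hmin' : ∀ x ∈ Set.Icc (-1:ℝ) 1, m ≤ g x := fun x hx => hmin hx
  -- absCoef computation
  have habs : absCoef ((fun x : ℝ => ![x, x^2]) '' Set.Icc (-1) 1)
      ![![r, r^2], ![s, s^2], ![t, t^2]] = max 1 (1 - 3*m) := by
    unfold absCoef
    have hset : {σ : ℝ | 1 ≤ σ ∧
        (fun x : ℝ => ![x, x^2]) '' Set.Icc (-1) 1 ⊆
          scaledSimplex ![![r, r^2], ![s, s^2], ![t, t^2]] σ}
        = Set.Ici (max 1 (1 - 3*m)) := by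
      ext σ
      simp only [Set.mem_setOf_eq, Set.mem_Ici, max_le_iff]
      constructor
      · rintro ⟨h1, hsub⟩
        refine ⟨h1, ?_⟩
        have hmem := hsub (Set.mem_image_of_mem _ hx₀)
        have hall := (mem_scaled_iff r s t hrs hst σ h1 x₀).1 hmem
        have h0 := hall 0
        have h1' := hall 1
        have h2 := hall 2
        have : (1-σ)/3 ≤ m := by
          rw [hm, hg]
          exact le_min h0 (le_min h1' h2)
        linarith
      · rintro ⟨h1, h2⟩
        refine ⟨h1, ?_⟩
        rintro p ⟨x, hx, rfl⟩
        refine (mem_scaled_iff r s t hrs hst σ h1 x).2 ?_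
        intro j
        have hgx : m ≤ g x := hmin' x hx
        have h3 : (1-σ)/3 ≤ m := by linarith
        have h4 : g x ≤ lag ![r,s,t] j x := by
          rw [hg]
          fin_cases j
          · exact min_le_left _ _
          · exact le_trans (min_le_right _ _) (min_le_left _ _)
          · exact le_trans (min_le_right _ _) (min_le_right _ _)
        linarith
    rw [hset]
    exact csInf_Ici
  -- projNorm computation
  have hnorm : projNorm ![r, s, t] = 1 + 2 * max 0 (-m) := by
    unfold projNorm
    have hsum3 : ∀ x : ℝ, (∑ j, |lag ![r,s,t] j x|)
        = |lag ![r,s,t] 0 x| + |lag ![r,s,t] 1 x| + |lag ![r,s,t] 2 x| :=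
      fun x => Fin.sum_univ_three _
    have hF : ∀ x : ℝ, (∑ j, |lag ![r,s,t] j x|) = 1 + 2 * max 0 (-(g x)) := by
      intro x
      rw [hsum3 x, abs_lag_sum r s t x hrs hst, hg]
    have hgr : IsGreatest {s' : ℝ | ∃ x ∈ Set.Icc (-1:ℝ) 1, s' = ∑ j, |lag ![r,s,t] j x|}
        (1 + 2 * max 0 (-m)) := by
      constructor
      · exact ⟨x₀, hx₀, by rw [hF x₀, hm]⟩
      · rintro s' ⟨x, hx, rfl⟩
        rw [hF x]
        have hgx : m ≤ g x := hmin' x hx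
        have : max 0 (-(g x)) ≤ max 0 (-m) := max_le_max le_rfl (neg_le_neg hgx)
        linarith
    exact hgr.csSup_eq
  rw [habs, hnorm]
  rcases le_or_gt 0 m with h | h
  · rw [max_eq_left (by linarith : -m ≤ (0:ℝ)), max_eq_left (by linarith : 1 - 3*m ≤ 1)]
    norm_num
  · rw [max_eq_right (by linarith : (0:ℝ) ≤ -m), max_eq_right (by linarith : 1 ≤ 1 - 3*m)]
    ring
end

section
/- For cubic interpolation on [−1,1] at the four Chebyshev nodes ±√(2+√2)/2, ±√(2−√2)/2 (the zeros of 8x⁴ − 8x² + 1), the norm of the interpolation projector P : C[−1,1] → Π_3(R^1) equals √(2+√2). -/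
noncomputable def leb (a b x : ℝ) : ℝ :=
  (|x - b| * |x + b| * (|x - a| + |x + a|))/(2*a*((a-b)*(a+b)))
  + (|x - a| * |x + a| * (|x - b| + |x + b|))/(2*b*((a-b)*(a+b)))

lemma leb_neg (a b x : ℝ) : leb a b (-x) = leb a b x := by
  unfold leb
  rw [show |(-x) - b| = |x + b| by rw [← abs_neg]; ring_nf,
      show |(-x) + b| = |x - b| by rw [← abs_neg]; ring_nf,
      show |(-x) - a| = |x + a| by rw [← abs_neg]; ring_nf,
      show |(-x) + a| = |x - a| by rw [← abs_neg]; ring_nf]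
  ring

lemma sum_abs_lag (a b x : ℝ) (hb : 0 < b) (hba : b < a) :
    ∑ j, |lag ![-a,-b,b,a] j x| = leb a b x := by
  have ha : 0 < a := hb.trans hba
  have e1 : |(-a) - (-b)| = a - b := by rw [abs_of_neg (by linarith)]; ring
  have e2 : |(-a) - b| = a + b := by rw [abs_of_neg (by linarith)]; ring
  have e3 : |(-a) - a| = a + a := by rw [abs_of_neg (by linarith)]; ring
  have e4 : |(-b) - (-a)| = a - b := by rw [abs_of_pos (by linarith)]; ring
  have e5 : |(-b) - b| = b + b := by rw [abs_of_neg (by linarith)]; ring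
  have e6 : |(-b) - a| = a + b := by rw [abs_of_neg (by linarith)]; ring
  have e7 : |b - (-a)| = a + b := by rw [abs_of_pos (by linarith)]; ring
  have e8 : |b - (-b)| = b + b := by rw [abs_of_pos (by linarith)]; ring
  have e9 : |b - a| = a - b := by rw [abs_of_neg (by linarith)]; ring
  have e10 : |a - (-a)| = a + a := by rw [abs_of_pos (by linarith)]; ring
  have e11 : |a - (-b)| = a + b := by rw [abs_of_pos (by linarith)]; ring
  have e12 : |a - b| = a - b := by rw [abs_of_pos (by linarith)]
  have f1 : |x - (-a)| = |x + a| := by ring_nf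
  have f2 : |x - (-b)| = |x + b| := by ring_nf
  rw [Fin.sum_univ_four]
  rw [lag, lag, lag, lag,
    show (Finset.univ.erase (0 : Fin 4)) = {1,2,3} by decide,
    show (Finset.univ.erase (1 : Fin 4)) = {0,2,3} by decide,
    show (Finset.univ.erase (2 : Fin 4)) = {0,1,3} by decide,
    show (Finset.univ.erase (3 : Fin 4)) = {0,1,2} by decide]
  rw [Finset.prod_insert (by decide), Finset.prod_insert (by decide), Finset.prod_singleton,
      Finset.prod_insert (by decide), Finset.prod_insert (by decide), Finset.prod_singleton,
      Finset.prod_insert (by decide), Finset.prod_insert (by decide), Finset.prod_singleton,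
      Finset.prod_insert (by decide), Finset.prod_insert (by decide), Finset.prod_singleton]
  simp only [Matrix.cons_val_zero, Matrix.cons_val_one, Matrix.head_cons,
    Matrix.cons_val_two, Matrix.tail_cons, Matrix.cons_val_three]
  rw [abs_mul, abs_mul, abs_mul, abs_mul, abs_mul, abs_mul, abs_mul, abs_mul,
      abs_div, abs_div, abs_div, abs_div, abs_div, abs_div, abs_div, abs_div,
      abs_div, abs_div, abs_div, abs_div]
  rw [e1, e2, e3, e4, e5, e6, e7, e8, e9, e10, e11, e12, f1, f2]
  unfold leb
  field_simp
  ring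

lemma leb_one (s2 a b : ℝ) (hs2 : s2^2 = 2) (hs2p : 1 < s2)
    (ha2 : a^2 = (2+s2)/4) (hbval : b = a*(s2-1)) (hb : 0 < b) (hba : b < a)
    (ha1 : a < 1) : leb a b 1 = 2*a := by
  have ha : 0 < a := hb.trans hba
  have hb1 : b < 1 := hba.trans ha1
  unfold leb
  rw [abs_of_pos (by linarith : (0:ℝ) < 1 - b), abs_of_pos (by linarith : (0:ℝ) < 1 + b),
      abs_of_pos (by linarith : (0:ℝ) < 1 - a), abs_of_pos (by linarith : (0:ℝ) < 1 + a)]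
  subst hbval
  have h1 : a - a*(s2-1) > 0 := by linarith
  have h2 : a + a*(s2-1) > 0 := by linarith
  have hq1 : (a*(s2-1))^2 = 1 - a^2 := by linear_combination (4-2*s2)*ha2 + (a^2-1/2)*hs2
  have hk : 2*a*(a - a*(s2-1)) = 1 := by linear_combination (4-2*s2)*ha2 - (1/2)*hs2
  generalize hbb : a*(s2-1) = c at *
  have hD1 : 2*a*((a-c)*(a+c)) ≠ 0 := (mul_pos (mul_pos two_pos ha) (mul_pos h1 h2)).ne'
  have hD2 : 2*c*((a-c)*(a+c)) ≠ 0 := (mul_pos (mul_pos two_pos hb) (mul_pos h1 h2)).ne'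
  rw [div_add_div _ _ hD1 hD2, div_eq_iff (mul_ne_zero hD1 hD2)]
  linear_combination (-2*(2*a*((a-c)*(a+c)) + 2*c*((a-c)*(a+c))))*hq1
    + (-4*a*c*((a-c)*(a+c))*(a+c))*hk

lemma nbounds (s2 a b : ℝ) (hs2 : s2^2 = 2) (hs2p : 1 < s2)
    (ha2 : a^2 = (2+s2)/4) (hb2 : b^2 = (2-s2)/4) (ha : 0 < a) (hb : 0 < b) :
    (1.414:ℝ) ≤ s2 ∧ s2 ≤ 1.415 ∧ (0.38:ℝ) ≤ b ∧ b ≤ 0.383 ∧ (0.92:ℝ) ≤ a ∧ a ≤ 0.925 := by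
  have hs2pos : (0:ℝ) < s2 := by linarith
  have h1 : (1.414:ℝ) ≤ s2 := by nlinarith
  have h2 : s2 ≤ 1.415 := by nlinarith
  have h3 : (0.38:ℝ) ≤ b := by nlinarith
  have h4 : b ≤ 0.383 := by nlinarith
  have h5 : (0.92:ℝ) ≤ a := by nlinarith
  have h6 : a ≤ 0.925 := by nlinarith
  exact ⟨h1, h2, h3, h4, h5, h6⟩

lemma cubic_bound (a b x : ℝ) (hbl : (0.38:ℝ) ≤ b) (hbu : b ≤ 0.383)
    (hal : (0.92:ℝ) ≤ a) (hau : a ≤ 0.925) (hxb : b ≤ x) (hxa : x ≤ a) :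
    b*(x^2 - b^2) + x*(a^2 - x^2) ≤ 1/2 := by
  have hx0 : (0:ℝ) ≤ x := by linarith
  have ha2u : a^2 ≤ 0.855625 := by nlinarith
  have hb2l : (0.1444:ℝ) ≤ b^2 := by nlinarith
  have hb3 : (0.0548:ℝ) ≤ b^3 := by
    nlinarith [mul_nonneg (by linarith : (0:ℝ) ≤ b - 0.38) (by linarith : (0:ℝ) ≤ b^2 - 0.1444)]
  nlinarith [mul_nonneg (by linarith : (0:ℝ) ≤ x + 0.971) (sq_nonneg (x - 0.677)),
    mul_nonneg (by linarith : (0:ℝ) ≤ 0.383 - b) (sq_nonneg x),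
    mul_nonneg (by linarith : (0:ℝ) ≤ 0.855625 - a^2) hx0]

lemma leb_bound (s2 a b : ℝ) (hs2 : s2^2 = 2) (hs2p : 1 < s2)
    (ha2 : a^2 = (2+s2)/4) (hbval : b = a*(s2-1)) (hb : 0 < b) (hba : b < a)
    (ha1 : a < 1) (x : ℝ) (hx0 : 0 ≤ x) (hx1 : x ≤ 1) : leb a b x ≤ 2*a := by
  have ha : 0 < a := hb.trans hba
  have hs2pos : (0:ℝ) < s2 := by linarith
  have hE : (a-b)*(a+b) = s2/2 := by
    rw [hbval]; linear_combination (2*s2 - s2^2)*ha2 - (s2/4)*hs2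
  have hab : a*b = s2/4 := by
    rw [hbval]; linear_combination (s2-1)*ha2 + (1/4)*hs2
  have hb2 : b^2 = (2-s2)/4 := by
    rw [hbval]; linear_combination ((s2-1)^2)*ha2 + (1/4)*s2*hs2
  have hab2 : a^2 + b^2 = 1 := by rw [ha2, hb2]; ring
  have hkey : a + b = a*s2 := by rw [hbval]; ring
  have hast : 1 ≤ a*s2 := by nlinarith [mul_pos ha hs2pos]
  unfold leb
  rw [hE]
  rw [abs_of_nonneg (by linarith : (0:ℝ) ≤ x + b), abs_of_nonneg (by linarith : (0:ℝ) ≤ x + a)]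
  have h2a : s2 < 2*a := by nlinarith [ha2, hs2, mul_pos ha hs2pos]
  have heqA : 2*a^2*b*s2^2 = 4*a^2*b := by linear_combination (2*a^2*b)*hs2
  rcases le_total x b with hxb | hxb
  · -- 0 ≤ x ≤ b
    rw [abs_of_nonpos (by linarith : x - b ≤ 0), abs_of_nonpos (by linarith : x - a ≤ 0)]
    rw [div_add_div _ _ (by positivity) (by positivity), div_le_iff₀ (by positivity)]
    have hg : 2*a*b*s2*(a^2+b^2) = 2*a*b*s2 := by linear_combination (2*a*b*s2)*hab2
    have hp1 : 0 ≤ 2*a*b*(2*a - s2) :=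
      mul_nonneg (by positivity) (by linarith)
    have hp2 : 0 ≤ 4*a*b*s2*x^2 := by positivity
    nlinarith [heqA, hg, hp1, hp2]
  · rcases le_total x a with hxa | hxa
    · -- b ≤ x ≤ a
      rw [abs_of_nonneg (by linarith : 0 ≤ x - b), abs_of_nonpos (by linarith : x - a ≤ 0)]
      rw [div_add_div _ _ (by positivity) (by positivity), div_le_iff₀ (by positivity)]
      obtain ⟨n1, n2, n3, n4, n5, n6⟩ := nbounds s2 a b hs2 hs2p ha2 hb2 ha hb
      have hclean : b*(x^2 - b^2) + x*(a^2 - x^2) ≤ 1/2 := cubic_bound a b x n3 n4 n5 n6 hxb hxa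
      have hab4 : a*s2 = 4*a^2*b := by linear_combination (-4*a)*hab
      have hprod : 0 ≤ (1/2 - (b*(x^2 - b^2) + x*(a^2 - x^2)))*(2*a*s2) :=
        mul_nonneg (by linarith) (by positivity)
      linarith [heqA, hab4, hprod]
    · -- a ≤ x ≤ 1
      rw [abs_of_nonneg (by linarith : 0 ≤ x - b), abs_of_nonneg (by linarith : 0 ≤ x - a)]
      rw [div_add_div _ _ (by positivity) (by positivity), div_le_iff₀ (by positivity)]
      have h3 : 0 ≤ (1-x)*((a+b)*(x + x^2 + a*b)) :=
        mul_nonneg (by linarith) (mul_nonneg (by linarith) (by positivity))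
      have heq : a*b*(a+b) - (x*(b*(x^2-b^2) + a*(x^2-a^2)))
          = (1-x)*((a+b)*(x + x^2 + a*b)) + x*(a+b)*(a^2+b^2-1) := by ring
      have hclean : x*(b*(x^2-b^2) + a*(x^2-a^2)) ≤ a*b*(a+b) := by
        have h4 : x*(a+b)*(a^2+b^2-1) = 0 := by rw [hab2]; ring
        linarith [h3, heq, h4]
      have he2 : 2*s2*(a*b*(a+b)) = 4*a^2*b := by
        linear_combination (2*s2*a*b)*hkey + (2*a^2*b)*hs2
      have hprod : 0 ≤ (a*b*(a+b) - x*(b*(x^2-b^2) + a*(x^2-a^2)))*(2*s2) :=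
        mul_nonneg (by linarith) (by positivity)
      linarith [heqA, he2, hprod]

theorem cubic_chebyshev_projNorm :
    projNorm ![-(Real.sqrt (2 + Real.sqrt 2))/2, -(Real.sqrt (2 - Real.sqrt 2))/2,
        (Real.sqrt (2 - Real.sqrt 2))/2, (Real.sqrt (2 + Real.sqrt 2))/2] =
      Real.sqrt (2 + Real.sqrt 2) := by
  have hs2 : (Real.sqrt 2)^2 = 2 := Real.sq_sqrt (by norm_num)
  have hs2nn := Real.sqrt_nonneg 2
  have hs2p : 1 < Real.sqrt 2 := by nlinarith
  have hs2lt2 : Real.sqrt 2 < 2 := by nlinarith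
  set s2 := Real.sqrt 2 with hs2def
  have hA2 : (Real.sqrt (2+s2))^2 = 2+s2 := Real.sq_sqrt (by linarith)
  have hB2 : (Real.sqrt (2-s2))^2 = 2-s2 := Real.sq_sqrt (by linarith)
  have hApos : 0 < Real.sqrt (2+s2) := Real.sqrt_pos.2 (by linarith)
  have hBpos : 0 < Real.sqrt (2-s2) := Real.sqrt_pos.2 (by linarith)
  set a : ℝ := Real.sqrt (2+s2)/2 with hadef
  set b : ℝ := Real.sqrt (2-s2)/2 with hbdef
  have ha : 0 < a := by rw [hadef]; linarith
  have hb : 0 < b := by rw [hbdef]; linarith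
  have ha2 : a^2 = (2+s2)/4 := by rw [hadef, div_pow, hA2]; norm_num
  have hb2 : b^2 = (2-s2)/4 := by rw [hbdef, div_pow, hB2]; norm_num
  have hbval : b = a*(s2-1) := by
    have h : b^2 = (a*(s2-1))^2 := by
      rw [hb2]; linear_combination (-(s2-1)^2)*ha2 + (-(s2/4))*hs2
    have h2 : 0 < a*(s2-1) := mul_pos ha (by linarith)
    nlinarith [h, h2, hb]
  have hba : b < a := by
    rw [hbval]; nlinarith [mul_pos ha (by linarith : (0:ℝ) < 2 - s2)]
  have ha1 : a < 1 := by nlinarith [ha2, hs2lt2, ha]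
  have hM : Real.sqrt (2 + s2) = 2*a := by rw [hadef]; ring
  have hnodes : ![-(Real.sqrt (2 + s2))/2, -(Real.sqrt (2 - s2))/2,
        (Real.sqrt (2 - s2))/2, (Real.sqrt (2 + s2))/2] = ![-a,-b,b,a] := by
    funext i
    fin_cases i <;> simp [hadef, hbdef] <;> ring
  rw [hnodes, hM, projNorm]
  apply IsGreatest.csSup_eq
  constructor
  · refine ⟨1, ⟨by norm_num, le_refl 1⟩, ?_⟩
    rw [sum_abs_lag a b 1 hb hba, leb_one s2 a b hs2 hs2p ha2 hbval hb hba ha1]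
  · rintro y ⟨x, hx, rfl⟩
    rw [sum_abs_lag a b x hb hba]
    rcases le_total 0 x with h0 | h0
    · exact leb_bound s2 a b hs2 hs2p ha2 hbval hb hba ha1 x h0 hx.2
    · have h := leb_bound s2 a b hs2 hs2p ha2 hbval hb hba ha1 (-x) (by linarith)
        (by linarith [hx.1])
      rwa [leb_neg] at h
end
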